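/- Let $SP_s(x)$ be a generalized star with center $x$ of degree $s \ge 3$, and let $w$ be a vertex such that every vertex of $SP_s(x)$ is within distance $i$ of $w$. If $|SP_s(x)| = si+1$, then $w = x$ and $SP_s(x) - x$ is a disjoint union of $s$ paths each of order $i$. -/

import Mathlib

open SimpleGraph

/-- A burning sequence of length `k` (0-indexed: `x 0, …, x (k-1)`):
the distance conditions and the covering condition. -/
def IsBurnSeq {V : Type*} (G : SimpleGraph V) (k : ℕ) (x : ℕ → V) : Prop :=
  (∀ i j : ℕ, i < j → j < k → (↑(j - i) : ℕ∞) ≤ G.edist (x i) (x j)) ∧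
  (∀ v : V, ∃ i < k, G.edist (x i) v ≤ (↑(k - 1 - i) : ℕ∞))

/-- The burning number of a graph: the least length of a burning sequence. -/
noncomputable def burningNumber {V : Type*} (G : SimpleGraph V) : ℕ :=
  sInf {k | ∃ x : ℕ → V, IsBurnSeq G k x}

/-- `G` is a path graph of order `m`: a tree with all degrees at most `2`. -/
def IsPathGraph {V : Type*} (G : SimpleGraph V) (m : ℕ) : Prop :=
  G.IsTree ∧ Nat.card V = m ∧ ∀ v : V, (G.neighborSet v).ncard ≤ 2

namespace StarAux

variable {V : Type*} {G : SimpleGraph V}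

/-- A walk whose support lies in `S` gives reachability in the induced graph. -/
lemma reachable_induce_of_walk {S : Set V} {u v : V} (p : G.Walk u v)
    (hp : ∀ z ∈ p.support, z ∈ S) (hu : u ∈ S) (hv : v ∈ S) :
    (G.induce S).Reachable ⟨u, hu⟩ ⟨v, hv⟩ := by
  induction p with
  | nil => rfl
  | @cons a b c h q ih =>
      have hb : b ∈ S := hp b (by simp)
      have h1 : (G.induce S).Adj ⟨a, hu⟩ ⟨b, hb⟩ := h
      exact (h1.reachable).trans (ih (fun z hz => hp z (by simp [hz])) hb hv)

/-- Reachability in the induced graph gives a walk in `G` with support in `S`. -/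
lemma exists_walk_of_reachable_induce {S : Set V} {a b : S}
    (h : (G.induce S).Reachable a b) :
    ∃ p : G.Walk a.1 b.1, ∀ z ∈ p.support, z ∈ S := by
  obtain ⟨q⟩ := h
  refine ⟨q.map (Embedding.induce S).toHom, ?_⟩
  intro z hz
  replace hz := Eq.mp (congrArg (z ∈ ·) (SimpleGraph.Walk.support_map _ q)) hz
  obtain ⟨z', _, rfl⟩ := List.mem_map.mp hz
  exact z'.2

lemma reachable_of_mem_support {u v z : V} (p : G.Walk u v) (hz : z ∈ p.support) :
    G.Reachable u z := by
  classical
  exact ⟨p.takeUntil z hz⟩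

/-- A type is the disjoint union of the supports of connected components. -/
def componentSigmaEquiv {W : Type*} (H : SimpleGraph W) :
    W ≃ Σ c : H.ConnectedComponent, c.supp where
  toFun v := ⟨H.connectedComponentMk v, v, rfl⟩
  invFun p := p.2.1
  left_inv v := rfl
  right_inv := by rintro ⟨c, v, hv⟩; subst hv; rfl

end StarAux

open StarAux

theorem stmt_1 {V : Type*} (G : SimpleGraph V) (x w : V) (s i : ℕ)
    (hs : 3 ≤ s) (htree : G.IsTree)
    (hdeg : (G.neighborSet x).ncard = s)
    (hother : ∀ v : V, v ≠ x → (G.neighborSet v).ncard ≤ 2)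
    (hheight : ∀ v : V, G.dist w v ≤ i)
    (hcard : Nat.card V = s * i + 1) :
    w = x ∧
      Nat.card (G.induce ({x}ᶜ : Set V)).ConnectedComponent = s ∧
      ∀ c : (G.induce ({x}ᶜ : Set V)).ConnectedComponent,
        IsPathGraph ((G.induce ({x}ᶜ : Set V)).induce c.supp) i := by
  classical
  haveI : Finite V := Nat.finite_of_card_ne_zero (by omega)
  haveI : Fintype V := Fintype.ofFinite V
  have hconn := htree.isConnected
  have hacyc := htree.IsAcyclic
  have hre : ∀ u v : V, G.Reachable u v := fun u v => hconn.preconnected u v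
  have hdist0 : ∀ v : V, v ≠ x → 1 ≤ G.dist x v := fun v hv =>
    Nat.one_le_iff_ne_zero.mpr (fun h0 => hv ((hre x v).dist_eq_zero_iff.mp h0).symm)
  have hmemc : ∀ {v : V}, v ≠ x → v ∈ ({x}ᶜ : Set V) := fun hv => by simp [hv]
  set G' := G.induce ({x}ᶜ : Set V) with hG'def
  -- parent lemma
  have hparent : ∀ v : V, v ≠ x → ∃ z : V, G.Adj z v ∧ G.dist x z + 1 = G.dist x v := by
    intro v hv
    obtain ⟨p, hp⟩ := hconn.exists_walk_length_eq_dist x v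
    obtain ⟨z, hzadj, q, hq⟩ := p.reverse.exists_eq_cons_of_ne (Ne.symm hv).symm
    refine ⟨z, hzadj.symm, ?_⟩
    have hlen : q.length + 1 = G.dist x v := by
      have := congrArg SimpleGraph.Walk.length hq
      simpa [hp] using this.symm
    have h1 : G.dist x z ≤ q.length := by
      have : G.dist z x ≤ q.length := SimpleGraph.dist_le q
      rwa [SimpleGraph.dist_comm] at this
    have h2 : G.dist x v ≤ G.dist x z + 1 := by
      have ht := hconn.dist_triangle (u := x) (v := z) (w := v)
      have : G.dist z v ≤ 1 := SimpleGraph.dist_le (hzadj.symm.toWalk)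
      omega
    omega
  -- three neighbors is too many
  have key3 : ∀ z : V, z ≠ x → ∀ a b c : V, G.Adj z a → G.Adj z b → G.Adj z c →
      a ≠ b → a ≠ c → b ≠ c → False := by
    intro z hz a b c ha hb hc hab hac hbc
    have hsub : ({a, b, c} : Set V) ⊆ G.neighborSet z := by
      intro t ht
      rcases ht with h | h | h <;> subst h <;> assumption
    have h3 : ({a, b, c} : Set V).ncard = 3 := by
      rw [Set.ncard_insert_of_notMem (by simp [hab, hac]) (Set.toFinite _),
        Set.ncard_pair hbc]
    have := Set.ncard_le_ncard hsub (Set.toFinite _)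
    have := hother z hz
    omega
  -- same component from a walk avoiding x
  have hsame : ∀ (u v : V) (hu : u ≠ x) (hv : v ≠ x) (p : G.Walk u v), x ∉ p.support →
      G'.connectedComponentMk ⟨u, hmemc hu⟩ = G'.connectedComponentMk ⟨v, hmemc hv⟩ := by
    intro u v hu hv p hp
    exact SimpleGraph.ConnectedComponent.sound
      (reachable_induce_of_walk p (fun z hz => hmemc (fun h => hp (h ▸ hz)))
        (hmemc hu) (hmemc hv))
  have hadj_same : ∀ (u v : V) (hu : u ≠ x) (hv : v ≠ x), G.Adj u v →
      G'.connectedComponentMk ⟨u, hmemc hu⟩ = G'.connectedComponentMk ⟨v, hmemc hv⟩ := by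
    intro u v hu hv hadj
    refine hsame u v hu hv hadj.toWalk ?_
    simp [SimpleGraph.Walk.support_cons]
    exact ⟨Ne.symm hu, Ne.symm hv⟩
  -- same component gives a walk avoiding x
  have hsame' : ∀ (u v : V) (hu : u ≠ x) (hv : v ≠ x),
      G'.connectedComponentMk ⟨u, hmemc hu⟩ = G'.connectedComponentMk ⟨v, hmemc hv⟩ →
      ∃ p : G.Walk u v, x ∉ p.support := by
    intro u v hu hv h
    obtain ⟨p, hp⟩ := exists_walk_of_reachable_induce
      (SimpleGraph.ConnectedComponent.exact h)
    exact ⟨p, fun hx => (hp x hx) rfl⟩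
  -- distance additivity across components
  have hdistadd : ∀ (u v : V) (hu : u ≠ x) (hv : v ≠ x),
      G'.connectedComponentMk ⟨u, hmemc hu⟩ ≠ G'.connectedComponentMk ⟨v, hmemc hv⟩ →
      G.dist u x + G.dist x v ≤ G.dist u v := by
    intro u v hu hv hne
    obtain ⟨p, hp⟩ := hconn.exists_walk_length_eq_dist u v
    have hx : x ∈ p.support := by
      by_contra hx
      exact hne (hsame u v hu hv p hx)
    have hsplit := p.take_spec hx
    have hlen : (p.takeUntil x hx).length + (p.dropUntil x hx).length = p.length := by
      conv_rhs => rw [← hsplit]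
      rw [SimpleGraph.Walk.length_append]
    have h1 : G.dist u x ≤ (p.takeUntil x hx).length := SimpleGraph.dist_le _
    have h2 : G.dist x v ≤ (p.dropUntil x hx).length := SimpleGraph.dist_le _
    omega
  -- injectivity of (component, distance)
  have hinj : ∀ d : ℕ, ∀ u v : V, ∀ (hu : u ≠ x) (hv : v ≠ x),
      G.dist x u = d → G.dist x v = d →
      G'.connectedComponentMk ⟨u, hmemc hu⟩ = G'.connectedComponentMk ⟨v, hmemc hv⟩ →
      u = v := by
    intro d
    induction d using Nat.strong_induction_on with
    | _ d ih =>
      intro u v hu hv hdu hdv hcomp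
      by_contra huv
      rcases Nat.lt_or_ge d 2 with hd2 | hd2
      · -- d = 1 (d = 0 impossible)
        have hd1 : d = 1 := by have := hdist0 u hu; omega
        have hxu : G.Adj x u := SimpleGraph.dist_eq_one_iff_adj.mp (hd1 ▸ hdu)
        have hxv : G.Adj x v := SimpleGraph.dist_eq_one_iff_adj.mp (hd1 ▸ hdv)
        obtain ⟨p, hp⟩ := hsame' u v hu hv hcomp
        have hbp : x ∉ p.bypass.support := fun hx => hp (p.support_bypass_subset hx)
        let P1 : G.Path u v := ⟨p.bypass, p.bypass_isPath⟩
        let P2 : G.Path u v := ⟨.cons hxu.symm (.cons hxv .nil), by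
          simp [SimpleGraph.Walk.isPath_def, huv]
          exact ⟨hu, Ne.symm hv⟩⟩
        have := hacyc.path_unique P1 P2
        apply hbp
        rw [show p.bypass = (P1 : G.Walk u v) from rfl, this]
        simp [P2]
      · -- d ≥ 2
        obtain ⟨zu, hzuadj, hzud⟩ := hparent u hu
        obtain ⟨zv, hzvadj, hzvd⟩ := hparent v hv
        have hzux : zu ≠ x := by
          intro h; subst h
          rw [SimpleGraph.dist_self] at hzud; omega
        have hzvx : zv ≠ x := by
          intro h; subst h
          rw [SimpleGraph.dist_self] at hzvd; omega
        have hc1 := hadj_same zu u hzux hu hzuadj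
        have hc2 := hadj_same zv v hzvx hv hzvadj
        have hzuv : zu = zv := by
          refine ih (d - 1) (by omega) zu zv hzux hzvx (by omega) (by omega) ?_
          rw [hc1, hcomp, ← hc2]
        subst hzuv
        obtain ⟨t, htadj, htd⟩ := hparent zu hzux
        exact key3 zu hzux u v t hzuadj hzvadj htadj.symm huv
          (by intro h; subst h; omega) (by intro h; subst h; omega)
  -- the neighbor-to-component bijection
  let f : (G.neighborSet x) → G'.ConnectedComponent := fun y =>
    G'.connectedComponentMk ⟨y.1, hmemc (SimpleGraph.Adj.ne' y.2)⟩
  have hfinj : Function.Injective f := by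
    rintro ⟨y, hy⟩ ⟨z, hz⟩ h
    exact Subtype.ext (hinj 1 y z hy.ne' hz.ne'
      (SimpleGraph.dist_eq_one_iff_adj.mpr hy) (SimpleGraph.dist_eq_one_iff_adj.mpr hz) h)
  have hfsurj : Function.Surjective f := by
    intro c
    obtain ⟨a, ha⟩ := Quot.exists_rep c
    have hax : a.1 ≠ x := a.2
    obtain ⟨p0⟩ := hre x a.1
    have hbp : p0.bypass.IsPath := p0.bypass_isPath
    obtain ⟨y, hxy, q, hq⟩ := p0.bypass.exists_eq_cons_of_ne (Ne.symm hax)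
    have hyx : y ≠ x := hxy.ne'
    have hxq : x ∉ q.support := by
      rw [hq] at hbp
      exact ((SimpleGraph.Walk.cons_isPath_iff _ _).mp hbp).2
    refine ⟨⟨y, hxy⟩, ?_⟩
    have h1 := hsame y a.1 hyx hax q hxq
    rw [show f ⟨y, hxy⟩ = G'.connectedComponentMk ⟨y, hmemc hyx⟩ from rfl, h1, ← ha]
    rfl
  have hcomp_card : Nat.card G'.ConnectedComponent = s := by
    rw [← Nat.card_eq_of_bijective f ⟨hfinj, hfsurj⟩, Nat.card_coe_set_eq, hdeg]
  haveI : Fintype G'.ConnectedComponent := Fintype.ofFinite _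
  have hsum : ∑ c : G'.ConnectedComponent, Nat.card c.supp = s * i := by
    have h1 : Nat.card ↥({x}ᶜ : Set V) = s * i := by
      have h2 := Set.ncard_add_ncard_compl ({x} : Set V)
      rw [Set.ncard_singleton] at h2
      rw [Nat.card_coe_set_eq]
      omega
    have h2 : Nat.card ↥({x}ᶜ : Set V) = ∑ c : G'.ConnectedComponent, Nat.card c.supp := by
      rw [Nat.card_congr (componentSigmaEquiv G'), Nat.card_eq_fintype_card,
        Fintype.card_sigma]
      simp [Nat.card_eq_fintype_card]
    omega
  -- bounding component sizes by distances
  have hbound : ∀ (c : G'.ConnectedComponent) (m : ℕ),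
      (∀ v : V, (hv : v ≠ x) → G'.connectedComponentMk ⟨v, hmemc hv⟩ = c → G.dist x v ≤ m) →
      Nat.card c.supp ≤ m := by
    intro c m hm
    have hgd : ∀ a : c.supp, 1 ≤ G.dist x a.1.1 ∧ G.dist x a.1.1 ≤ m := by
      intro a
      have hax : a.1.1 ≠ x := a.1.2
      exact ⟨hdist0 a.1.1 hax,
        hm a.1.1 hax ((SimpleGraph.ConnectedComponent.mem_supp_iff c a.1).mp a.2)⟩
    let g : c.supp → Fin m := fun a => ⟨G.dist x a.1.1 - 1, by have := hgd a; omega⟩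
    have hginj : Function.Injective g := by
      rintro a b hab
      have hax : a.1.1 ≠ x := a.1.2
      have hbx : b.1.1 ≠ x := b.1.2
      have hd : G.dist x a.1.1 = G.dist x b.1.1 := by
        have h1 := congrArg Fin.val hab
        have h2 := hgd a
        have h3 := hgd b
        simp only [g] at h1
        omega
      have hcc : G'.connectedComponentMk ⟨a.1.1, hmemc hax⟩ =
          G'.connectedComponentMk ⟨b.1.1, hmemc hbx⟩ := by
        rw [show (G'.connectedComponentMk ⟨a.1.1, hmemc hax⟩) = G'.connectedComponentMk a.1 from rfl,
          show (G'.connectedComponentMk ⟨b.1.1, hmemc hbx⟩) = G'.connectedComponentMk b.1 from rfl,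
          (SimpleGraph.ConnectedComponent.mem_supp_iff c a.1).mp a.2,
          (SimpleGraph.ConnectedComponent.mem_supp_iff c b.1).mp b.2]
      have := hinj (G.dist x a.1.1) a.1.1 b.1.1 hax hbx rfl hd.symm hcc
      exact Subtype.ext (Subtype.ext this)
    calc Nat.card c.supp ≤ Nat.card (Fin m) := Nat.card_le_card_of_injective g hginj
      _ = m := by simp
  -- w = x
  have hwx : w = x := by
    by_contra hwx
    have hd1 : 1 ≤ G.dist x w := hdist0 w hwx
    have hdi : G.dist x w ≤ i := by
      have := hheight x
      rwa [SimpleGraph.dist_comm] at this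
    set d := G.dist x w with hd
    set cw := G'.connectedComponentMk ⟨w, hmemc hwx⟩ with hcw
    have hb1 : Nat.card cw.supp ≤ i + d := by
      apply hbound
      intro v hv hvc
      have ht := hconn.dist_triangle (u := x) (v := w) (w := v)
      have h2 := hheight v
      omega
    have hb2 : ∀ c, c ≠ cw → Nat.card c.supp ≤ i - d := by
      intro c hc
      apply hbound
      intro v hv hvc
      have hne : G'.connectedComponentMk ⟨v, hmemc hv⟩ ≠
          G'.connectedComponentMk ⟨w, hmemc hwx⟩ := by
        rw [hvc, ← hcw]; exact hc
      have h1 := hdistadd v w hv hwx hne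
      have h2 := hheight v
      rw [SimpleGraph.dist_comm (u := w) (v := v)] at h2
      rw [SimpleGraph.dist_comm (u := v) (v := x)] at h1
      omega
    have hsum2 : (s : ℕ) * i ≤ (i + d) + (s - 1) * (i - d) := by
      rw [← hsum, ← Finset.add_sum_erase Finset.univ _ (Finset.mem_univ cw)]
      have hle := Finset.sum_le_card_nsmul (Finset.univ.erase cw)
        (fun c => Nat.card c.supp) (i - d)
        (fun c hc => hb2 c (Finset.ne_of_mem_erase hc))
      have hcard_erase : (Finset.univ.erase cw).card = s - 1 := by
        rw [Finset.card_erase_of_mem (Finset.mem_univ cw), Finset.card_univ,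
          ← Nat.card_eq_fintype_card, hcomp_card]
      rw [hcard_erase, smul_eq_mul] at hle
      omega
    obtain ⟨e, rfl⟩ : ∃ e, i = d + e := ⟨i - d, by omega⟩
    obtain ⟨t, rfl⟩ : ∃ t, s = t + 3 := ⟨s - 3, by omega⟩
    rw [Nat.add_sub_cancel_left] at hsum2
    have : (t + 3 - 1) = t + 2 := by omega
    rw [this] at hsum2
    nlinarith
  -- every component has exactly i vertices
  have hble : ∀ c : G'.ConnectedComponent, Nat.card c.supp ≤ i := fun c =>
    hbound c i (fun v hv _ => by rw [← hwx]; exact hheight v)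
  have hci : ∀ c : G'.ConnectedComponent, Nat.card c.supp = i := by
    by_contra h
    push_neg at h
    obtain ⟨c0, hc0⟩ := h
    have hlt : ∑ c : G'.ConnectedComponent, Nat.card c.supp <
        ∑ _c : G'.ConnectedComponent, i :=
      Finset.sum_lt_sum (fun c _ => hble c)
        ⟨c0, Finset.mem_univ c0, lt_of_le_of_ne (hble c0) hc0⟩
    rw [hsum, Finset.sum_const, Finset.card_univ, ← Nat.card_eq_fintype_card,
      hcomp_card, smul_eq_mul] at hlt
    omega
  refine ⟨hwx, hcomp_card, ?_⟩
  intro c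
  obtain ⟨a0, ha0⟩ := Quot.exists_rep c
  have ha0m : a0 ∈ c.supp := (SimpleGraph.ConnectedComponent.mem_supp_iff c a0).mpr ha0
  refine ⟨⟨?_, ?_⟩, hci c, ?_⟩
  · -- connected
    rw [SimpleGraph.connected_iff]
    constructor
    · intro a b
      have hra : G'.Reachable a.1 b.1 := by
        apply SimpleGraph.ConnectedComponent.exact
        rw [(SimpleGraph.ConnectedComponent.mem_supp_iff c a.1).mp a.2,
          (SimpleGraph.ConnectedComponent.mem_supp_iff c b.1).mp b.2]
      obtain ⟨q⟩ := hra
      have hq : ∀ z ∈ q.support, z ∈ c.supp := by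
        intro z hz
        have hrz := reachable_of_mem_support q hz
        rw [SimpleGraph.ConnectedComponent.mem_supp_iff,
          ← (SimpleGraph.ConnectedComponent.mem_supp_iff c a.1).mp a.2]
        exact (SimpleGraph.ConnectedComponent.sound hrz).symm
      exact reachable_induce_of_walk q hq a.2 b.2
    · exact ⟨⟨a0, ha0m⟩⟩
  · -- acyclic
    intro v cyc hcyc
    have h1 : ((cyc.map (SimpleGraph.Embedding.induce c.supp).toHom).map
        (SimpleGraph.Embedding.induce ({x}ᶜ : Set V)).toHom).IsCycle := by
      apply (SimpleGraph.Walk.map_isCycle_iff_of_injective Subtype.val_injective).mpr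
      exact (SimpleGraph.Walk.map_isCycle_iff_of_injective Subtype.val_injective).mpr hcyc
    exact hacyc _ h1
  · -- degrees
    intro v
    have hvx : v.1.1 ≠ x := v.1.2
    have hsub : Nat.card ((G'.induce c.supp).neighborSet v) ≤
        Nat.card (G.neighborSet v.1.1) := by
      apply Nat.card_le_card_of_injective
        (fun z => (⟨z.1.1.1, z.2⟩ : G.neighborSet v.1.1))
      rintro z₁ z₂ h
      simp only [Subtype.mk.injEq] at h
      exact Subtype.ext (Subtype.ext (Subtype.ext (by have h' := congrArg Subtype.val h; exact h')))
    rw [← Nat.card_coe_set_eq]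
    calc Nat.card ((G'.induce c.supp).neighborSet v)
        ≤ Nat.card (G.neighborSet v.1.1) := hsub
      _ = (G.neighborSet v.1.1).ncard := Nat.card_coe_set_eq _
      _ ≤ 2 := hother _ hvx
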